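/- arXiv:2008.11032 — 3 statements merged into one kernel-verified Lean document; each statement's English description precedes it below -/
import Mathlib

section
/- Let g ∈ 𝒮(ℝ), σ > 0, μ ∈ ℝ, a > 0. Suppose x(t) = Σ_{k=1}^K A_k(t) e^{i2πφ_k(t)} with A_k ∈ C¹(ℝ) ∩ L^∞, φ_k ∈ C²(ℝ), |A'_k(t)| ≤ ε₁ and |φ''_k(t)| ≤ ε₂ for all t. Define W̃(a,b) = ∫ x(b+at)(1/σ)g(t/σ)e^{−i2πμt}dt. Then |W̃(a,b) − Σ_{k=1}^K A_k(b)e^{i2πφ_k(b)} ĝ(σ(μ − aφ'_k(b)))| ≤ aσ (K ε₁ I₁ + π ε₂ I₂ a σ Σ_{k=1}^K A_k(b)), where I_n = ∫_ℝ |tⁿ g(t)| dt. -/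
open Real MeasureTheory


lemma aux_mvt {f : ℝ → ℝ} (hf : Differentiable ℝ f) {ε : ℝ} (hb : ∀ t, |deriv f t| ≤ ε)
    (x y : ℝ) : |f y - f x| ≤ ε * |y - x| := by
  have := Convex.norm_image_sub_le_of_norm_deriv_le (fun t _ => hf t)
    (fun t _ => by simpa using hb t) convex_univ (Set.mem_univ x) (Set.mem_univ y)
  simpa using this

lemma aux_exp (θ : ℝ) : ‖Complex.exp ((θ : ℂ) * Complex.I) - 1‖ ≤ |θ| := by
  have h1 : ‖Complex.exp ((θ : ℂ) * Complex.I) - 1‖ ^ 2 ≤ |θ| ^ 2 := by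
    rw [Complex.sq_norm, Complex.normSq_apply]
    simp only [Complex.sub_re, Complex.sub_im, Complex.one_re, Complex.one_im,
      Complex.exp_ofReal_mul_I_re, Complex.exp_ofReal_mul_I_im, sq_abs]
    nlinarith [Real.sin_sq_add_cos_sq θ, Real.one_sub_sq_div_two_le_cos (x := θ)]
  nlinarith [norm_nonneg (Complex.exp ((θ : ℂ) * Complex.I) - 1), abs_nonneg θ]

lemma aux_taylor {φ : ℝ → ℝ} (hφd : Differentiable ℝ φ) (hφ1 : ContDiff ℝ 1 (deriv φ))
    {ε : ℝ} (hb : ∀ t, |deriv (deriv φ) t| ≤ ε) (b h : ℝ) :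
    |φ (b + h) - φ b - deriv φ b * h| ≤ ε * h ^ 2 / 2 := by
  have hε : 0 ≤ ε := (abs_nonneg _).trans (hb b)
  have hψ : Differentiable ℝ (deriv φ) := hφ1.differentiable one_ne_zero
  have hcont : Continuous (deriv φ) := hφ1.continuous
  have hlip : ∀ u, |deriv φ u - deriv φ b| ≤ ε * |u - b| := fun u => aux_mvt hψ hb b u
  have key : ∫ u in b..(b + h), deriv φ u = φ (b + h) - φ b :=
    intervalIntegral.integral_deriv_eq_sub (fun x _ => hφd x)
      (hcont.intervalIntegrable _ _)
  have key2 : ∫ u in b..(b + h), (deriv φ u - deriv φ b)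
      = φ (b + h) - φ b - deriv φ b * h := by
    rw [intervalIntegral.integral_sub (hcont.intervalIntegrable _ _)
      intervalIntegrable_const, key, intervalIntegral.integral_const]
    simp; ring
  rw [← key2]
  have hboundInt : IntervalIntegrable (fun u => ε * |u - b|) volume b (b + h) :=
    (continuous_const.mul ((continuous_id.sub continuous_const).abs)).intervalIntegrable _ _
  have h1 : ‖∫ u in b..(b + h), (deriv φ u - deriv φ b)‖
      ≤ abs (∫ u in b..(b + h), ε * |u - b|) :=
    intervalIntegral.norm_integral_le_abs_of_norm_le
      (Filter.Eventually.of_forall fun t => by simpa using hlip t) hboundInt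
  rw [Real.norm_eq_abs] at h1
  refine h1.trans ?_
  have h2 : ∫ u in b..(b + h), ε * |u - b| = ε * ∫ u in (0:ℝ)..h, |u| := by
    rw [intervalIntegral.integral_const_mul]
    congr 1
    have := intervalIntegral.integral_comp_sub_right (a := b) (b := b + h)
      (fun u => |u|) b
    simpa using this
  rw [h2]
  have h3 : abs (∫ u in (0:ℝ)..h, |u|) = h ^ 2 / 2 := by
    rcases le_or_gt 0 h with hh | hh
    · rw [intervalIntegral.integral_congr (g := fun u => u) ?_, integral_id]
      · rw [show (h ^ 2 - 0 ^ 2) / 2 = h ^ 2 / 2 by ring, abs_of_nonneg (by positivity)]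
      · intro u hu
        rw [Set.uIcc_of_le hh] at hu
        exact abs_of_nonneg hu.1
    · rw [intervalIntegral.integral_congr (g := fun u => -u) ?_]
      · rw [intervalIntegral.integral_neg, integral_id, abs_neg,
          show (h ^ 2 - 0 ^ 2) / 2 = h ^ 2 / 2 by ring, abs_of_nonneg (by positivity)]
      · intro u hu
        rw [Set.uIcc_of_ge hh.le] at hu
        exact abs_of_nonpos hu.2
  rw [abs_mul, abs_of_nonneg hε, h3]
  ring_nf
  exact le_rfl

lemma aux_term (A : ℝ → ℝ) (φ : ℝ → ℝ) (hA : ContDiff ℝ 1 A) (hφ : ContDiff ℝ 2 φ)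
    {ε₁ ε₂ : ℝ} (hA' : ∀ t, |deriv A t| ≤ ε₁) (hφ'' : ∀ t, |deriv (deriv φ) t| ≤ ε₂)
    (b h : ℝ) (hAb : 0 ≤ A b) :
    ‖(A (b + h) : ℂ) * Complex.exp (((2 * π * φ (b + h) : ℝ) : ℂ) * Complex.I)
      - (A b : ℂ) * Complex.exp (((2 * π * φ b : ℝ) : ℂ) * Complex.I)
        * Complex.exp (((2 * π * deriv φ b * h : ℝ) : ℂ) * Complex.I)‖
      ≤ ε₁ * |h| + A b * (π * ε₂ * h ^ 2) := by
  have hφd : Differentiable ℝ φ := hφ.differentiable two_ne_zero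
  have hφ1 : ContDiff ℝ 1 (deriv φ) := by
    have h2 := hφ
    rw [show (2 : WithTop ℕ∞) = 1 + 1 by norm_num] at h2
    exact (contDiff_succ_iff_deriv.mp h2).2.2
  set α : ℝ := 2 * π * φ (b + h) with hα
  set β : ℝ := 2 * π * (φ b + deriv φ b * h) with hβ
  set θ : ℝ := α - β with hθ
  have e2 : Complex.exp (((2 * π * φ b : ℝ) : ℂ) * Complex.I)
      * Complex.exp (((2 * π * deriv φ b * h : ℝ) : ℂ) * Complex.I)
      = Complex.exp ((β : ℂ) * Complex.I) := by
    rw [← Complex.exp_add]; congr 1; rw [hβ]; push_cast; ring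
  have e3 : Complex.exp ((α : ℂ) * Complex.I)
      = Complex.exp ((β : ℂ) * Complex.I) * Complex.exp ((θ : ℂ) * Complex.I) := by
    rw [← Complex.exp_add]; congr 1; rw [hθ]; push_cast; ring
  have decomp : (A (b + h) : ℂ) * Complex.exp ((α : ℂ) * Complex.I)
      - (A b : ℂ) * Complex.exp ((β : ℂ) * Complex.I)
      = ((A (b + h) : ℂ) - (A b : ℂ)) * Complex.exp ((α : ℂ) * Complex.I)
        + (A b : ℂ) * Complex.exp ((β : ℂ) * Complex.I)
          * (Complex.exp ((θ : ℂ) * Complex.I) - 1) := by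
    rw [e3]; ring
  rw [mul_assoc, e2, decomp]
  have habs1 : ‖((A (b + h) : ℂ) - (A b : ℂ)) * Complex.exp ((α : ℂ) * Complex.I)‖
      = |A (b + h) - A b| := by
    rw [norm_mul, Complex.norm_exp_ofReal_mul_I, mul_one, ← Complex.ofReal_sub,
      Complex.norm_real, Real.norm_eq_abs]
  have habs2 : ‖(A b : ℂ) * Complex.exp ((β : ℂ) * Complex.I)
      * (Complex.exp ((θ : ℂ) * Complex.I) - 1)‖
      = A b * ‖Complex.exp ((θ : ℂ) * Complex.I) - 1‖ := by
    rw [norm_mul, norm_mul, Complex.norm_exp_ofReal_mul_I, Complex.norm_real, Real.norm_eq_abs,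
      abs_of_nonneg hAb, mul_one]
  have h1 : |A (b + h) - A b| ≤ ε₁ * |h| := by
    simpa using aux_mvt (hA.differentiable one_ne_zero) hA' b (b + h)
  have h2 : ‖Complex.exp ((θ : ℂ) * Complex.I) - 1‖ ≤ π * ε₂ * h ^ 2 := by
    refine (aux_exp θ).trans ?_
    have ht := aux_taylor hφd hφ1 hφ'' b h
    have hθeq : |θ| = 2 * π * |φ (b + h) - φ b - deriv φ b * h| := by
      rw [show θ = 2 * π * (φ (b + h) - φ b - deriv φ b * h) by rw [hθ, hα, hβ]; ring,
        abs_mul, abs_of_nonneg (by positivity : (0:ℝ) ≤ 2 * π)]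
    rw [hθeq]
    calc 2 * π * |φ (b + h) - φ b - deriv φ b * h| ≤ 2 * π * (ε₂ * h ^ 2 / 2) := by
          gcongr
      _ = π * ε₂ * h ^ 2 := by ring
  calc ‖_‖ ≤ _ := norm_add_le _ _
    _ ≤ ε₁ * |h| + A b * (π * ε₂ * h ^ 2) := by
        rw [habs1, habs2]
        exact add_le_add h1 (mul_le_mul_of_nonneg_left h2 hAb)

theorem stmt_7 (K : ℕ) (A : Fin K → ℝ → ℝ) (φ : Fin K → ℝ → ℝ)
    (g : SchwartzMap ℝ ℂ) (σ μ a ε₁ ε₂ : ℝ) (hσ : 0 < σ) (ha : 0 < a)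
    (hA : ∀ k, ContDiff ℝ 1 (A k)) (hAbdd : ∀ k, ∃ C, ∀ t, |A k t| ≤ C)
    (hApos : ∀ k t, 0 < A k t)
    (hφ : ∀ k, ContDiff ℝ 2 (φ k))
    (hA' : ∀ k t, |deriv (A k) t| ≤ ε₁)
    (hφ'' : ∀ k t, |deriv (deriv (φ k)) t| ≤ ε₂)
    (b : ℝ) :
    ‖((∫ t : ℝ, (∑ k, ((A k (b + a * t) : ℝ) : ℂ) *
            Complex.exp (Complex.I * (2 * (π : ℂ) * ((φ k (b + a * t) : ℝ) : ℂ)))) *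
          ((σ : ℂ))⁻¹ * g (t / σ) *
          Complex.exp (-(2 * (π : ℂ) * (μ : ℂ) * (t : ℂ)) * Complex.I))
        - ∑ k, ((A k b : ℝ) : ℂ) *
            Complex.exp (Complex.I * (2 * (π : ℂ) * ((φ k b : ℝ) : ℂ))) *
            (∫ t : ℝ, g t *
              Complex.exp (-(2 * (π : ℂ) * ((σ * (μ - a * deriv (φ k) b) : ℝ) : ℂ) * (t : ℂ)) * Complex.I)))‖
      ≤ a * σ * (K * ε₁ * (∫ t : ℝ, |t| ^ 1 * ‖g t‖)
          + π * ε₂ * (∫ t : ℝ, |t| ^ 2 * ‖g t‖) * a * σ * (∑ k, A k b)) := by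
  rcases Nat.eq_zero_or_pos K with hK | hK
  · subst hK
    simp
  have hε₁ : 0 ≤ ε₁ := (abs_nonneg _).trans (hA' ⟨0, hK⟩ 0)
  have hε₂ : 0 ≤ ε₂ := (abs_nonneg _).trans (hφ'' ⟨0, hK⟩ 0)
  have hσ' : (σ : ℂ) ≠ 0 := Complex.ofReal_ne_zero.mpr hσ.ne'
  choose C hC using hAbdd
  set c : ℝ := a * σ with hc
  have hc0 : 0 < c := mul_pos ha hσ
  set e : ℝ → ℂ := fun θ => Complex.exp ((θ : ℂ) * Complex.I) with he
  have habs_e : ∀ θ : ℝ, ‖e θ‖ = 1 := fun θ => Complex.norm_exp_ofReal_mul_I θ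
  set Hk : Fin K → ℝ → ℂ := fun k s =>
    ((A k (b + c * s) : ℂ) * e (2 * π * φ k (b + c * s)) * e (-(2 * π * (μ * σ) * s))) * g s
    with hHk
  set M : Fin K → ℝ → ℂ := fun k s =>
    ((A k b : ℂ) * e (2 * π * φ k b)
      * e (-(2 * π * (σ * (μ - a * deriv (φ k) b)) * s))) * g s with hM
  have hgInt : Integrable (fun s : ℝ => g s) := g.integrable
  -- continuity
  have hconte : ∀ f : ℝ → ℝ, Continuous f → Continuous fun s => e (f s) := fun f hf =>
    Complex.continuous_exp.comp ((Complex.continuous_ofReal.comp hf).mul continuous_const)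
  -- integrability of Hk and M
  have hHkInt : ∀ k, Integrable (Hk k) := by
    intro k
    apply hgInt.bdd_mul (c := C k)
    · exact (((Complex.continuous_ofReal.comp
        ((hA k).continuous.comp (by fun_prop))).mul
          (hconte _ (continuous_const.mul ((hφ k).continuous.comp (by fun_prop))))).mul
            (hconte _ (by fun_prop))).aestronglyMeasurable
    · refine Filter.Eventually.of_forall fun s => ?_
      rw [norm_mul, norm_mul, habs_e,
        habs_e, mul_one, mul_one, Complex.norm_real, Real.norm_eq_abs]
      exact hC k _
  have hMInt : ∀ k, Integrable (M k) := by
    intro k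
    apply hgInt.bdd_mul (c := C k)
    · exact ((continuous_const.mul (hconte _ (by fun_prop)))).aestronglyMeasurable
    · refine Filter.Eventually.of_forall fun s => ?_
      rw [norm_mul, habs_e, mul_one, norm_mul,
        habs_e, mul_one, Complex.norm_real, Real.norm_eq_abs]
      exact hC k b
  have hHInt : Integrable (fun s => ∑ k, Hk k s) := integrable_finset_sum _ fun k _ => hHkInt k
  -- Step 1 : substitution
  have hFH : ∀ t : ℝ, (∑ k, ((A k (b + a * t) : ℝ) : ℂ) *
            Complex.exp (Complex.I * (2 * (π : ℂ) * ((φ k (b + a * t) : ℝ) : ℂ)))) *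
          ((σ : ℂ))⁻¹ * g (t / σ) *
          Complex.exp (-(2 * (π : ℂ) * (μ : ℂ) * (t : ℂ)) * Complex.I)
        = ((σ : ℂ))⁻¹ * ∑ k, Hk k (t / σ) := by
    intro t
    have h1 : b + c * (t / σ) = b + a * t := by rw [hc]; field_simp
    have h2 : -(2 * π * (μ * σ) * (t / σ)) = -(2 * π * μ * t) := by field_simp
    simp only [hHk, h1, h2]
    rw [Finset.mul_sum, Finset.sum_mul, Finset.sum_mul, Finset.sum_mul]
    refine Finset.sum_congr rfl fun k _ => ?_
    simp only [he]
    push_cast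
    ring_nf
  have E1 : (∫ t : ℝ, (∑ k, ((A k (b + a * t) : ℝ) : ℂ) *
            Complex.exp (Complex.I * (2 * (π : ℂ) * ((φ k (b + a * t) : ℝ) : ℂ)))) *
          ((σ : ℂ))⁻¹ * g (t / σ) *
          Complex.exp (-(2 * (π : ℂ) * (μ : ℂ) * (t : ℂ)) * Complex.I))
        = ∫ s : ℝ, ∑ k, Hk k s := by
    simp only [hFH]
    rw [MeasureTheory.integral_const_mul, MeasureTheory.Measure.integral_comp_div
      (fun s => ∑ k, Hk k s) σ, abs_of_pos hσ, Complex.real_smul, ← mul_assoc,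
      inv_mul_cancel₀ hσ', one_mul]
  -- Step 2 : the sum of main terms
  have E2 : ∀ k : Fin K, ((A k b : ℝ) : ℂ) *
            Complex.exp (Complex.I * (2 * (π : ℂ) * ((φ k b : ℝ) : ℂ))) *
            (∫ t : ℝ, g t *
              Complex.exp (-(2 * (π : ℂ) * ((σ * (μ - a * deriv (φ k) b) : ℝ) : ℂ) * (t : ℂ)) * Complex.I))
          = ∫ s : ℝ, M k s := by
    intro k
    rw [← MeasureTheory.integral_const_mul]
    congr 1
    funext s
    simp only [hM, he]
    push_cast
    ring_nf
  have E2' : (∑ k, ((A k b : ℝ) : ℂ) *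
            Complex.exp (Complex.I * (2 * (π : ℂ) * ((φ k b : ℝ) : ℂ))) *
            (∫ t : ℝ, g t *
              Complex.exp (-(2 * (π : ℂ) * ((σ * (μ - a * deriv (φ k) b) : ℝ) : ℂ) * (t : ℂ)) * Complex.I)))
        = ∫ s : ℝ, ∑ k, M k s := by
    rw [MeasureTheory.integral_finset_sum _ fun k _ => hMInt k]
    exact Finset.sum_congr rfl fun k _ => E2 k
  rw [E1, E2', ← MeasureTheory.integral_sub hHInt
    (integrable_finset_sum _ fun k _ => hMInt k)]
  -- the bound function
  set B : ℝ → ℝ := fun s =>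
    (∑ k, (ε₁ * |c * s| + A k b * (π * ε₂ * (c * s) ^ 2))) * ‖g s‖ with hB
  have hBeq : ∀ s, B s = (K * ε₁ * c) * (|s| ^ 1 * ‖g s‖)
      + (π * ε₂ * c ^ 2 * (∑ k, A k b)) * (|s| ^ 2 * ‖g s‖) := by
    intro s
    simp only [hB]
    rw [Finset.sum_add_distrib, Finset.sum_const, ← Finset.sum_mul, Finset.card_univ,
      Fintype.card_fin, abs_mul, abs_of_pos hc0, nsmul_eq_mul, mul_pow, ← sq_abs s]
    push_cast
    ring
  have hBInt : Integrable B := by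
    have i1 : Integrable (fun s : ℝ => |s| ^ 1 * ‖g s‖) := by
      have := g.integrable_pow_mul (volume) 1
      simpa [Real.norm_eq_abs] using this
    have i2 : Integrable (fun s : ℝ => |s| ^ 2 * ‖g s‖) := by
      have := g.integrable_pow_mul (volume) 2
      simpa [Real.norm_eq_abs] using this
    have : Integrable (fun s : ℝ => (K * ε₁ * c) * (|s| ^ 1 * ‖g s‖)
        + (π * ε₂ * c ^ 2 * (∑ k, A k b)) * (|s| ^ 2 * ‖g s‖)) :=
      (i1.const_mul _).add (i2.const_mul _)
    exact this.congr (Filter.Eventually.of_forall fun s => (hBeq s).symm)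
  -- pointwise bound
  have hpt : ∀ s : ℝ, ‖(∑ k, Hk k s) - ∑ k, M k s‖ ≤ B s := by
    intro s
    rw [← Finset.sum_sub_distrib]
    have hterm : ∀ k : Fin K, ‖Hk k s - M k s‖
        ≤ (ε₁ * |c * s| + A k b * (π * ε₂ * (c * s) ^ 2)) * ‖g s‖ := by
      intro k
      have hE : e (-(2 * π * (σ * (μ - a * deriv (φ k) b)) * s))
          = e (2 * π * deriv (φ k) b * (c * s)) * e (-(2 * π * (μ * σ) * s)) := by
        simp only [he]
        rw [← Complex.exp_add]
        congr 1
        rw [hc]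
        push_cast
        ring
      have hsplit : Hk k s - M k s
          = ((A k (b + c * s) : ℂ) * e (2 * π * φ k (b + c * s))
              - (A k b : ℂ) * e (2 * π * φ k b) * e (2 * π * deriv (φ k) b * (c * s)))
            * (e (-(2 * π * (μ * σ) * s)) * g s) := by
        simp only [hHk, hM]
        rw [hE]
        ring
      rw [hsplit, norm_mul, norm_mul, habs_e, one_mul]
      refine mul_le_mul_of_nonneg_right ?_ (norm_nonneg _)
      exact aux_term (A k) (φ k) (hA k) (hφ k) (hA' k) (hφ'' k) b (c * s)
        (hApos k b).le
    calc ‖∑ k, (Hk k s - M k s)‖ ≤ ∑ k, ‖Hk k s - M k s‖ := norm_sum_le _ _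
      _ ≤ ∑ k, (ε₁ * |c * s| + A k b * (π * ε₂ * (c * s) ^ 2)) * ‖g s‖ :=
          Finset.sum_le_sum fun k _ => hterm k
      _ = B s := by simp only [hB]; rw [Finset.sum_mul]
  -- conclude
  calc ‖∫ s : ℝ, ((∑ k, Hk k s) - ∑ k, M k s)‖ ≤ ∫ s, B s :=
        norm_integral_le_of_norm_le hBInt (Filter.Eventually.of_forall hpt)
    _ = (K * ε₁ * c) * (∫ t : ℝ, |t| ^ 1 * ‖g t‖)
        + (π * ε₂ * c ^ 2 * (∑ k, A k b)) * (∫ t : ℝ, |t| ^ 2 * ‖g t‖) := by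
        rw [MeasureTheory.integral_congr_ae (Filter.Eventually.of_forall hBeq)]
        rw [MeasureTheory.integral_add, MeasureTheory.integral_const_mul,
          MeasureTheory.integral_const_mul]
        · have := g.integrable_pow_mul (volume) 1
          exact ((by simpa [Real.norm_eq_abs] using this :
            Integrable (fun s : ℝ => |s| ^ 1 * ‖g s‖))).const_mul _
        · have := g.integrable_pow_mul (volume) 2
          exact ((by simpa [Real.norm_eq_abs] using this :
            Integrable (fun s : ℝ => |s| ^ 2 * ‖g s‖))).const_mul _
    _ ≤ a * σ * (K * ε₁ * (∫ t : ℝ, |t| ^ 1 * ‖g t‖)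
          + π * ε₂ * (∫ t : ℝ, |t| ^ 2 * ‖g t‖) * a * σ * (∑ k, A k b)) := by
        rw [hc]
        ring_nf
        exact le_rfl
end

section
/- Let g ∈ 𝒮(ℝ), σ > 0, μ ∈ ℝ, a > 0. For φ ∈ C²(ℝ) define W̃^{g'}(a,b) = ∫ x(b+at)(1/σ)g'(t/σ)e^{−i2πμt}dt for x(t) = A e^{i2πφ(t)}. If x(b+at) is replaced by its chirp approximation x_m(t) = x(b)e^{i2π(φ'(b)at + ½φ''(b)a²t²)}, then ∫ x_m(t)(1/σ)g'(t/σ)e^{−i2πμt}dt = i2πσ x(b)(μ − aφ'(b)) G₀(a,b) − i2πa²σ² x(b) φ''(b) G₁(a,b), where G_j(a,b) = 𝔉(e^{iπφ''(b)a²σ²t²} t^j g(t))(σ(μ − aφ'(b))). -/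
open Real MeasureTheory Complex FourierTransform

lemma chirp_hasDeriv (c : ℝ) (u : ℝ) :
    HasDerivAt (fun v : ℝ => Complex.exp (Complex.I * π * c * (v:ℂ)^2))
      (Complex.I * 2 * π * c * u * Complex.exp (Complex.I * π * c * (u:ℂ)^2)) u := by
  have h1 : HasDerivAt (fun v : ℝ => ((v:ℂ))) 1 u := by
    simpa using (hasDerivAt_id u).ofReal_comp
  have h2 : HasDerivAt (fun v : ℝ => ((v:ℂ))^2) (2 * (u:ℂ)) u := by
    have : HasDerivAt (fun v : ℝ => (v:ℂ) * (v:ℂ)) (1 * (u:ℂ) + (u:ℂ) * 1) u := h1.mul h1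
    simp only [pow_two]
    convert this using 1
    ring
  have h3 := (h2.const_mul (Complex.I * π * c)).cexp
  convert h3 using 1
  ring

lemma chirp_norm (c : ℝ) (u : ℝ) : ‖Complex.exp (Complex.I * π * c * (u:ℂ)^2)‖ = 1 := by
  rw [Complex.norm_exp]
  have : (Complex.I * π * c * (u:ℂ)^2).re = 0 := by
    simp only [Complex.mul_re, Complex.mul_im, Complex.I_re, Complex.I_im,
      Complex.ofReal_re, Complex.ofReal_im]
    have h1 : ((u:ℂ)^2).im = 0 := by
      simp [pow_two, Complex.mul_im]
    have h2 : ((u:ℂ)^2).re = u^2 := by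
      simp [pow_two, Complex.mul_re]
    rw [h1, h2]; ring
  simp [this]

lemma char_norm (β u : ℝ) : ‖Complex.exp (-(2 * (π:ℂ) * (β:ℂ) * (u:ℂ)) * Complex.I)‖ = 1 := by
  rw [Complex.norm_exp]
  have : ((-(2 * (π:ℂ) * (β:ℂ) * (u:ℂ)) * Complex.I)).re = 0 := by
    simp [Complex.mul_re, Complex.mul_im]
  simp [this]

lemma integrable_chirp_pow_mul (g : SchwartzMap ℝ ℂ) (c β : ℝ) (j : ℕ) :
    Integrable (fun u : ℝ => Complex.exp (Complex.I * π * c * (u:ℂ)^2) * (u:ℂ)^j * g u *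
      Complex.exp (-(2 * (π:ℂ) * (β:ℂ) * (u:ℂ)) * Complex.I)) := by
  apply (g.integrable_pow_mul volume j).mono
  · apply Continuous.aestronglyMeasurable
    fun_prop
  · filter_upwards with u
    simp only [norm_mul, chirp_norm, char_norm, one_mul, mul_one, norm_pow,
      Complex.norm_real, Real.norm_eq_abs, Complex.norm_natCast]
    simp [abs_of_nonneg, Real.norm_eq_abs]

lemma key_ibp (g : SchwartzMap ℝ ℂ) (c β : ℝ) :
    (∫ u : ℝ, Complex.exp (Complex.I * π * c * (u:ℂ)^2) * deriv (fun s : ℝ => g s) u *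
        Complex.exp (-(2 * (π:ℂ) * (β:ℂ) * (u:ℂ)) * Complex.I))
    = Complex.I * 2 * π * (β:ℂ) *
        (∫ u : ℝ, Complex.exp (Complex.I * π * c * (u:ℂ)^2) * (u:ℂ)^0 * g u *
          Complex.exp (-(2 * (π:ℂ) * (β:ℂ) * (u:ℂ)) * Complex.I))
      - Complex.I * 2 * π * (c:ℂ) *
        (∫ u : ℝ, Complex.exp (Complex.I * π * c * (u:ℂ)^2) * (u:ℂ)^1 * g u *
          Complex.exp (-(2 * (π:ℂ) * (β:ℂ) * (u:ℂ)) * Complex.I)) := by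
  set E : ℝ → ℂ := fun u => Complex.exp (Complex.I * π * c * (u:ℂ)^2) with hE
  set F : ℝ → ℂ := fun u => E u * g u with hF
  have hFd : ∀ u : ℝ, HasDerivAt F
      (E u * deriv (fun s : ℝ => g s) u + Complex.I * 2 * π * c * u * F u) u := by
    intro u
    have hg : HasDerivAt (fun s : ℝ => g s) (deriv (fun s : ℝ => g s) u) u :=
      g.differentiableAt.hasDerivAt
    have : HasDerivAt (fun v : ℝ => Complex.exp (Complex.I * π * c * (v:ℂ)^2) * g v)
        (Complex.I * 2 * π * c * u * Complex.exp (Complex.I * π * c * (u:ℂ)^2) * g u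
          + Complex.exp (Complex.I * π * c * (u:ℂ)^2) * deriv (fun s : ℝ => g s) u) u :=
      (chirp_hasDeriv c u).mul hg
    convert this using 1
    simp only [hF, hE]
    ring
  have hFdiff : Differentiable ℝ F := fun u => (hFd u).differentiableAt
  have hFint : Integrable F := by
    apply (g.integrable (μ := volume)).bdd_mul
    · exact (Complex.continuous_exp.comp (by fun_prop)).aestronglyMeasurable
    · exact Filter.Eventually.of_forall fun u => le_of_eq (chirp_norm c u)
  have hgd : Integrable (fun u : ℝ => deriv (fun s : ℝ => g s) u) := by
    have := (SchwartzMap.derivCLM ℝ ℂ g).integrable (μ := volume)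
    apply this.congr
    filter_upwards with u
    simp [SchwartzMap.derivCLM_apply]
  have hEgd : Integrable (fun u : ℝ => E u * deriv (fun s : ℝ => g s) u) := by
    apply hgd.bdd_mul
    · exact (Complex.continuous_exp.comp (by fun_prop)).aestronglyMeasurable
    · exact Filter.Eventually.of_forall fun u => le_of_eq (chirp_norm c u)
  have huF : Integrable (fun u : ℝ => Complex.I * 2 * π * c * u * F u) := by
    apply ((g.integrable_pow_mul volume 1).const_mul (2 * π * |c|)).mono
    · apply Continuous.aestronglyMeasurable
      have : Continuous E := Complex.continuous_exp.comp (by fun_prop)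
      fun_prop
    · filter_upwards with u
      simp only [norm_mul, Complex.norm_I, Complex.norm_real, Real.norm_eq_abs, hF, hE,
        chirp_norm, one_mul, mul_one, Complex.norm_ofNat, pow_one, abs_abs, abs_norm, abs_two]
      apply le_of_eq; ring
  have hDint : Integrable (deriv F) := by
    have : deriv F = fun u => E u * deriv (fun s : ℝ => g s) u
        + Complex.I * 2 * π * c * u * F u := funext fun u => (hFd u).deriv
    rw [this]
    exact hEgd.add huF
  have h𝓕 := Real.fourier_deriv hFint hFdiff hDint
  have hexp : ∀ u : ℝ, ((-2 * π * u * β : ℝ) : ℂ) * Complex.I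
      = -(2 * (π:ℂ) * (β:ℂ) * (u:ℂ)) * Complex.I := by
    intro u; push_cast; ring
  have hG0 : 𝓕 F β = ∫ u : ℝ,
      Complex.exp (Complex.I * π * c * (u:ℂ)^2) * (u:ℂ)^0 * g u *
        Complex.exp (-(2 * (π:ℂ) * (β:ℂ) * (u:ℂ)) * Complex.I) := by
    rw [Real.fourier_real_eq_integral_exp_smul]
    refine integral_congr_ae (Filter.Eventually.of_forall fun u => ?_)
    simp only [smul_eq_mul, hF, hE, pow_zero, mul_one, hexp u]
    ring
  have hJint : Integrable (fun u : ℝ => E u * deriv (fun s : ℝ => g s) u *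
      Complex.exp (-(2 * (π:ℂ) * (β:ℂ) * (u:ℂ)) * Complex.I)) := by
    have hb : ∀ u : ℝ, ‖E u * Complex.exp (-(2 * (π:ℂ) * (β:ℂ) * (u:ℂ)) * Complex.I)‖ ≤ 1 := by
      intro u
      rw [norm_mul, hE, chirp_norm, char_norm]
      norm_num
    have hm : AEStronglyMeasurable (fun u : ℝ => E u *
        Complex.exp (-(2 * (π:ℂ) * (β:ℂ) * (u:ℂ)) * Complex.I)) volume := by
      apply Continuous.aestronglyMeasurable
      simp only [hE]
      fun_prop
    exact (hgd.bdd_mul hm (Filter.Eventually.of_forall hb)).congr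
      (Filter.Eventually.of_forall fun u => by ring)
  have hsplit : 𝓕 (deriv F) β
      = (∫ u : ℝ, Complex.exp (Complex.I * π * c * (u:ℂ)^2) * deriv (fun s : ℝ => g s) u *
          Complex.exp (-(2 * (π:ℂ) * (β:ℂ) * (u:ℂ)) * Complex.I))
        + Complex.I * 2 * π * (c:ℂ) *
          (∫ u : ℝ, Complex.exp (Complex.I * π * c * (u:ℂ)^2) * (u:ℂ)^1 * g u *
            Complex.exp (-(2 * (π:ℂ) * (β:ℂ) * (u:ℂ)) * Complex.I)) := by
    rw [Real.fourier_real_eq_integral_exp_smul, ← integral_const_mul,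
      ← integral_add hJint ((integrable_chirp_pow_mul g c β 1).const_mul _)]
    refine integral_congr_ae (Filter.Eventually.of_forall fun u => ?_)
    simp only []
    rw [(hFd u).deriv]
    simp only [smul_eq_mul, hF, hE, pow_one, hexp u]
    ring
  have hfin := congrFun h𝓕 β
  rw [hsplit, hG0, smul_eq_mul] at hfin
  linear_combination hfin

theorem stmt_11 (g : SchwartzMap ℝ ℂ) (σ μ a : ℝ) (hσ : 0 < σ) (ha : 0 < a)
    (φ : ℝ → ℝ) (hφ : ContDiff ℝ 2 φ) (A : ℝ) (hA : 0 < A) (b : ℝ)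
    -- `xb = x(b) = A e^{i2πφ(b)}`
    (xb : ℂ) (hxb : xb = (A : ℂ) * Complex.exp (Complex.I * (2 * (π : ℂ) * ((φ b : ℝ) : ℂ))))
    -- the chirped moments `G_j(a,b) = 𝔉(e^{iπφ''(b)a²σ²t²} t^j g(t))(σ(μ − aφ'(b)))`
    (G : ℕ → ℂ)
    (hG : ∀ j : ℕ, G j = ∫ t : ℝ,
      Complex.exp (Complex.I * (π : ℂ) * ((deriv (deriv φ) b * a ^ 2 * σ ^ 2 : ℝ) : ℂ) * (t : ℂ) ^ 2) *
        (t : ℂ) ^ j * g t *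
        Complex.exp (-(2 * (π : ℂ) * ((σ * (μ - a * deriv φ b) : ℝ) : ℂ) * (t : ℂ)) * Complex.I)) :
    (∫ t : ℝ, (xb * Complex.exp (Complex.I * (2 * (π : ℂ) *
          ((deriv φ b * (a * t) + (1 / 2) * deriv (deriv φ) b * a ^ 2 * t ^ 2 : ℝ) : ℂ)))) *
        ((σ : ℂ))⁻¹ * deriv (fun s : ℝ => g s) (t / σ) *
        Complex.exp (-(2 * (π : ℂ) * (μ : ℂ) * (t : ℂ)) * Complex.I))
      = Complex.I * 2 * (π : ℂ) * (σ : ℂ) * xb * ((μ - a * deriv φ b : ℝ) : ℂ) * G 0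
        - Complex.I * 2 * (π : ℂ) * ((a ^ 2 * σ ^ 2 : ℝ) : ℂ) * xb *
            ((deriv (deriv φ) b : ℝ) : ℂ) * G 1 := by
  have hσ' : σ ≠ 0 := ne_of_gt hσ
  have hσc : (σ : ℂ) ≠ 0 := by exact_mod_cast hσ'
  have key := key_ibp g (deriv (deriv φ) b * a ^ 2 * σ ^ 2) (σ * (μ - a * deriv φ b))
  rw [← hG 0, ← hG 1] at key
  set f : ℝ → ℂ := fun t : ℝ => (xb * Complex.exp (Complex.I * (2 * (π : ℂ) *
          ((deriv φ b * (a * t) + (1 / 2) * deriv (deriv φ) b * a ^ 2 * t ^ 2 : ℝ) : ℂ)))) *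
        ((σ : ℂ))⁻¹ * deriv (fun s : ℝ => g s) (t / σ) *
        Complex.exp (-(2 * (π : ℂ) * (μ : ℂ) * (t : ℂ)) * Complex.I) with hf
  have hcv := MeasureTheory.Measure.integral_comp_mul_left f σ
  have h1 : (∫ t : ℝ, f t) = (σ : ℝ) • ∫ x : ℝ, f (σ * x) := by
    rw [hcv, smul_smul, abs_of_pos (inv_pos.mpr hσ), mul_inv_cancel₀ hσ', one_smul]
  have hpt : ∀ u : ℝ, f (σ * u)
      = xb * ((σ : ℂ))⁻¹ *
        (Complex.exp (Complex.I * π * ((deriv (deriv φ) b * a ^ 2 * σ ^ 2 : ℝ) : ℂ) * (u:ℂ)^2) *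
          deriv (fun s : ℝ => g s) u *
          Complex.exp (-(2 * (π:ℂ) * ((σ * (μ - a * deriv φ b) : ℝ) : ℂ) * (u:ℂ)) * Complex.I)) := by
    intro u
    simp only [hf]
    rw [mul_div_cancel_left₀ u hσ']
    have hexp : Complex.exp (Complex.I * (2 * (π : ℂ) *
          ((deriv φ b * (a * (σ * u)) + (1 / 2) * deriv (deriv φ) b * a ^ 2 * (σ * u) ^ 2 : ℝ) : ℂ))) *
        Complex.exp (-(2 * (π : ℂ) * (μ : ℂ) * ((σ * u : ℝ) : ℂ)) * Complex.I)
        = Complex.exp (Complex.I * π * ((deriv (deriv φ) b * a ^ 2 * σ ^ 2 : ℝ) : ℂ) * (u:ℂ)^2) *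
          Complex.exp (-(2 * (π:ℂ) * ((σ * (μ - a * deriv φ b) : ℝ) : ℂ) * (u:ℂ)) * Complex.I) := by
      rw [← Complex.exp_add, ← Complex.exp_add]
      congr 1
      push_cast
      ring
    linear_combination (xb * ((σ : ℂ))⁻¹ * deriv (fun s : ℝ => g s) u) * hexp
  have h2 : (∫ x : ℝ, f (σ * x))
      = xb * ((σ : ℂ))⁻¹ *
        (∫ u : ℝ, Complex.exp (Complex.I * π * ((deriv (deriv φ) b * a ^ 2 * σ ^ 2 : ℝ) : ℂ) * (u:ℂ)^2) *
          deriv (fun s : ℝ => g s) u *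
          Complex.exp (-(2 * (π:ℂ) * ((σ * (μ - a * deriv φ b) : ℝ) : ℂ) * (u:ℂ)) * Complex.I)) := by
    rw [← integral_const_mul]
    exact integral_congr_ae (Filter.Eventually.of_forall fun u => hpt u)
  rw [h1, h2, key, Complex.real_smul]
  push_cast
  field_simp
end

section
/- Let x(t) = A e^{i2πξ₀t} with A > 0, ξ₀ > 0, g ∈ 𝒮, σ : ℝ → (0,∞) differentiable, μ ∈ ℝ. Then at every (a,b) with W̃_x(a,b) ≠ 0, the complex adaptive phase transformation ω^{adp,c}_x(a,b) := ∂_bW̃_x/(i2πW̃_x) + σ'(b)/(i2πσ(b)) + (σ'(b)/σ(b)) W̃^{g₃}_x/(i2πW̃_x) equals ξ₀. -/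
open Real MeasureTheory FourierTransform

/-- The adaptive continuous wavelet transform with window `g`, signal `x`,
time-varying parameter `σ` and frequency parameter `μ`. -/
noncomputable def adCWT (g x : ℝ → ℂ) (σ : ℝ → ℝ) (μ a b : ℝ) : ℂ :=
  ∫ t : ℝ, x (b + a * t) * ((σ b : ℂ))⁻¹ * g (t / σ b) *
    Complex.exp (-(2 * (π : ℂ) * (μ : ℂ) * (t : ℂ)) * Complex.I)

private lemma xsmul_integrable (g : SchwartzMap ℝ ℂ) :
    Integrable (fun t : ℝ => t • (g t : ℂ)) := by
  refine (g.integrable_pow_mul volume 1).mono'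
    (Continuous.aestronglyMeasurable (continuous_id.smul g.continuous)) ?_
  filter_upwards with t
  simp [norm_smul]

theorem stmt_15 (g : SchwartzMap ℝ ℂ) (σ : ℝ → ℝ) (hσpos : ∀ b, 0 < σ b)
    (hσd : Differentiable ℝ σ) (μ A ξ₀ : ℝ) (hA : 0 < A) (hξ₀ : 0 < ξ₀)
    (x : ℝ → ℂ)
    (hx : ∀ t, x t = (A : ℂ) * Complex.exp (Complex.I * (2 * (π : ℂ) * ((ξ₀ * t : ℝ) : ℂ))))
    (W W3 : ℝ → ℝ → ℂ)
    (hW : ∀ a b, W a b = adCWT (fun t => g t) x σ μ a b)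
    (hW3 : ∀ a b, W3 a b =
      adCWT (fun t => (t : ℂ) * deriv (fun s : ℝ => g s) t) x σ μ a b)
    (a b : ℝ) (ha : 0 < a) (hW0 : W a b ≠ 0) :
    (deriv (fun b' => W a b') b) / (Complex.I * 2 * (π : ℂ) * W a b)
      + ((deriv σ b : ℝ) : ℂ) / (Complex.I * 2 * (π : ℂ) * ((σ b : ℝ) : ℂ))
      + ((deriv σ b / σ b : ℝ) : ℂ) * (W3 a b / (Complex.I * 2 * (π : ℂ) * W a b))
      = (ξ₀ : ℂ) := by
  -- Step 1: explicit formula for the transform of the pure exponential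
  have key : ∀ (φ : ℝ → ℂ) (b' : ℝ), adCWT φ x σ μ a b'
      = (A : ℂ) * Complex.exp (Complex.I * (2 * (π:ℂ) * ξ₀ * b')) *
        𝓕 φ (σ b' * (μ - a * ξ₀)) := by
    intro φ b'
    have hσ := hσpos b'
    have hσ0 : (σ b' : ℝ) ≠ 0 := ne_of_gt hσ
    have hσ0' : ((σ b' : ℝ) : ℂ) ≠ 0 := Complex.ofReal_ne_zero.2 hσ0
    unfold adCWT
    have step1 : (∫ t : ℝ, x (b' + a * t) * ((σ b' : ℂ))⁻¹ * φ (t / σ b') *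
        Complex.exp (-(2 * (π : ℂ) * (μ : ℂ) * (t : ℂ)) * Complex.I))
        = ∫ t : ℝ, ((A : ℂ) * Complex.exp (Complex.I * (2 * (π:ℂ) * ξ₀ * b')) * ((σ b' : ℂ))⁻¹) •
          ((fun u : ℝ => Complex.exp ((↑(-2 * π * u * (σ b' * (μ - a * ξ₀))) : ℂ) * Complex.I) • φ u)
            (t / σ b')) := by
      congr 1; funext t
      rw [hx]
      beta_reduce
      simp only [smul_eq_mul]
      calc (A : ℂ) * Complex.exp (Complex.I * (2 * (π : ℂ) * ((ξ₀ * (b' + a * t) : ℝ) : ℂ))) *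
            ((σ b' : ℂ))⁻¹ * φ (t / σ b') *
            Complex.exp (-(2 * (π : ℂ) * (μ : ℂ) * (t : ℂ)) * Complex.I)
          = ((A:ℂ) * ((σ b' : ℂ))⁻¹ * φ (t / σ b')) *
            (Complex.exp (Complex.I * (2 * (π : ℂ) * ((ξ₀ * (b' + a * t) : ℝ) : ℂ))) *
             Complex.exp (-(2 * (π : ℂ) * (μ : ℂ) * (t : ℂ)) * Complex.I)) := by ring
        _ = ((A:ℂ) * ((σ b' : ℂ))⁻¹ * φ (t / σ b')) *
            (Complex.exp (Complex.I * (2 * (π:ℂ) * ξ₀ * b')) *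
             Complex.exp ((↑(-2 * π * (t / σ b') * (σ b' * (μ - a * ξ₀))) : ℂ) * Complex.I)) := by
              rw [← Complex.exp_add, ← Complex.exp_add]
              congr 1
              have ht : -2 * π * (t / σ b') * (σ b' * (μ - a * ξ₀))
                  = -2 * π * t * (μ - a * ξ₀) := by field_simp
              rw [ht]; push_cast; ring
        _ = _ := by ring
    rw [step1, integral_smul, MeasureTheory.Measure.integral_comp_div
        (fun u : ℝ => Complex.exp ((↑(-2 * π * u * (σ b' * (μ - a * ξ₀))) : ℂ) * Complex.I) • φ u)
        (σ b'),
      ← Real.fourier_real_eq_integral_exp_smul, abs_of_pos hσ]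
    rw [Complex.real_smul, smul_eq_mul]
    field_simp
  -- notation
  set ν : ℝ := μ - a * ξ₀ with hνdef
  set G : ℝ → ℂ := 𝓕 (fun t : ℝ => (g t : ℂ)) with hGdef
  set G' : ℝ → ℂ := 𝓕 (fun t : ℝ => (-2 * ↑π * Complex.I * ↑t) • (g t : ℂ)) with hG'def
  have hGd : ∀ w : ℝ, HasDerivAt G (G' w) w := fun w =>
    Real.hasDerivAt_fourier g.integrable (xsmul_integrable g) w
  set g1 : SchwartzMap ℝ ℂ := SchwartzMap.derivCLM ℝ ℂ g with hg1def
  have hg1e : deriv (fun s : ℝ => (g s : ℂ)) = fun t => g1 t := by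
    funext t; rw [hg1def, SchwartzMap.derivCLM_apply]
  -- Fourier transform of the derivative
  have hFg1 : 𝓕 (fun t : ℝ => (g1 t : ℂ))
      = fun w : ℝ => (2 * ↑π * Complex.I * ↑w) • G w := by
    rw [← hg1e]
    exact Real.fourier_deriv g.integrable g.differentiable
      (by rw [hg1e]; exact g1.integrable)
  -- two computations of the derivative of 𝓕 g1
  have heqd : ∀ w : ℝ, 𝓕 (fun t : ℝ => (-2 * ↑π * Complex.I * ↑t) • (g1 t : ℂ)) w
      = 2 * ↑π * Complex.I * G w + 2 * ↑π * Complex.I * ↑w * G' w := by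
    intro w
    have hd1 : HasDerivAt (𝓕 (fun t : ℝ => (g1 t : ℂ)))
        (𝓕 (fun t : ℝ => (-2 * ↑π * Complex.I * ↑t) • (g1 t : ℂ)) w) w :=
      Real.hasDerivAt_fourier g1.integrable (xsmul_integrable g1) w
    rw [hFg1] at hd1
    have hd2 : HasDerivAt (fun w' : ℝ => (2 * ↑π * Complex.I * (↑w' : ℂ)) • G w')
        (2 * ↑π * Complex.I * G w + 2 * ↑π * Complex.I * ↑w * G' w) w := by
      have hc : HasDerivAt (fun w' : ℝ => (2 * ↑π * Complex.I * (↑w' : ℂ)))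
          (2 * ↑π * Complex.I) w := by
        simpa using ((hasDerivAt_id (w : ℂ)).const_mul
          (2 * ↑π * Complex.I)).comp_ofReal
      have hm := hc.mul (hGd w)
      simp only [smul_eq_mul]
      exact hm
    exact hd1.unique hd2
  -- linearity
  have hlin : ∀ w : ℝ, 𝓕 (fun t : ℝ => (-2 * ↑π * Complex.I * ↑t) • (g1 t : ℂ)) w
      = (-2 * ↑π * Complex.I) * 𝓕 (fun t : ℝ => (t : ℂ) * g1 t) w := by
    intro w
    rw [Real.fourier_real_eq_integral_exp_smul,
      Real.fourier_real_eq_integral_exp_smul, ← integral_const_mul]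
    congr 1; funext t
    simp only [smul_eq_mul]; ring
  have hI2pi : (2 * (π:ℂ) * Complex.I) ≠ 0 := by
    simp [Real.pi_ne_zero, Complex.I_ne_zero, Complex.ofReal_ne_zero]
  have h3 : ∀ w : ℝ, 𝓕 (fun t : ℝ => (t : ℂ) * g1 t) w = -(G w) - ↑w * G' w := by
    intro w
    have h := (hlin w).symm.trans (heqd w)
    have hI : (-2 * (π:ℂ) * Complex.I) ≠ 0 := by
      simpa using neg_ne_zero.2 hI2pi
    apply mul_left_cancel₀ hI
    rw [h]; ring
  -- formulas for W and W3
  have hWf : ∀ b', W a b' = (A : ℂ) * Complex.exp (Complex.I * (2 * (π:ℂ) * ξ₀ * b')) *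
      G (σ b' * ν) := by
    intro b'; rw [hW, key]
  have hW3f : W3 a b = (A : ℂ) * Complex.exp (Complex.I * (2 * (π:ℂ) * ξ₀ * b)) *
      (-(G (σ b * ν)) - ↑(σ b * ν) * G' (σ b * ν)) := by
    rw [hW3, hg1e, key, h3]
  -- derivative of W in b
  have hE : HasDerivAt (fun b' : ℝ => (A : ℂ) * Complex.exp (Complex.I * (2 * (π:ℂ) * ξ₀ * b')))
      ((A : ℂ) * (Complex.I * (2 * (π:ℂ) * ξ₀) *
        Complex.exp (Complex.I * (2 * (π:ℂ) * ξ₀ * b)))) b := by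
    have hc : HasDerivAt (fun b' : ℝ => Complex.I * (2 * (π:ℂ) * ξ₀ * (b' : ℂ)))
        (Complex.I * (2 * (π:ℂ) * ξ₀)) b := by
      have := ((hasDerivAt_id (b : ℂ)).const_mul (Complex.I * (2 * (π:ℂ) * ξ₀))).comp_ofReal
      simpa [mul_assoc] using this
    have h' := hc.cexp.const_mul (A : ℂ)
    have e : (A : ℂ) * (Complex.I * (2 * (π:ℂ) * ξ₀) *
        Complex.exp (Complex.I * (2 * (π:ℂ) * ξ₀ * b))) = (A : ℂ) *
        (Complex.exp (Complex.I * (2 * (π:ℂ) * ξ₀ * b)) * (Complex.I * (2 * (π:ℂ) * ξ₀))) := by ring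
    rw [e]; exact h'
  have hwd : HasDerivAt (fun b' : ℝ => σ b' * ν) (deriv σ b * ν) b :=
    ((hσd b).hasDerivAt).mul_const ν
  have hGcomp : HasDerivAt (fun b' : ℝ => G (σ b' * ν))
      ((deriv σ b * ν) • G' (σ b * ν)) b := (hGd (σ b * ν)).scomp b hwd
  have hWd : deriv (fun b' => W a b') b
      = (A : ℂ) * (Complex.I * (2 * (π:ℂ) * ξ₀) *
          Complex.exp (Complex.I * (2 * (π:ℂ) * ξ₀ * b))) * G (σ b * ν)
        + (A : ℂ) * Complex.exp (Complex.I * (2 * (π:ℂ) * ξ₀ * b)) *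
          ((deriv σ b * ν) • G' (σ b * ν)) := by
    have hfun : (fun b' => W a b')
        = fun b' : ℝ => ((A : ℂ) * Complex.exp (Complex.I * (2 * (π:ℂ) * ↑ξ₀ * (b' : ℂ)))) *
            G (σ b' * ν) := funext fun b' => hWf b'
    rw [hfun]
    exact (hE.mul hGcomp).deriv
  -- final algebra
  have hs := hσpos b
  have hs0 : ((σ b : ℝ) : ℂ) ≠ 0 := Complex.ofReal_ne_zero.2 (ne_of_gt hs)
  have hE0 : (A : ℂ) * Complex.exp (Complex.I * (2 * (π:ℂ) * ξ₀ * b)) ≠ 0 :=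
    mul_ne_zero (Complex.ofReal_ne_zero.2 (ne_of_gt hA)) (Complex.exp_ne_zero _)
  have hP0 : G (σ b * ν) ≠ 0 := by
    intro h
    exact hW0 (by rw [hWf b, h, mul_zero])
  have hA0 : ((A : ℝ) : ℂ) ≠ 0 := Complex.ofReal_ne_zero.2 (ne_of_gt hA)
  have hEx0 : Complex.exp (Complex.I * (2 * (π:ℂ) * ξ₀ * b)) ≠ 0 := Complex.exp_ne_zero _
  have hπ0 : ((π : ℝ) : ℂ) ≠ 0 := Complex.ofReal_ne_zero.2 Real.pi_ne_zero
  rw [hWd, hWf b, hW3f, Complex.real_smul]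
  have hdν : ((deriv σ b * ν : ℝ) : ℂ) = ((deriv σ b : ℝ) : ℂ) * (ν : ℂ) := by push_cast; ring
  have hsν : ((σ b * ν : ℝ) : ℂ) = (σ b : ℂ) * (ν : ℂ) := by push_cast; ring
  have hds : ((deriv σ b / σ b : ℝ) : ℂ) = ((deriv σ b : ℝ) : ℂ) / (σ b : ℂ) := by push_cast; ring
  rw [hdν, hsν, hds]
  generalize G (σ b * ν) = P at hP0 ⊢
  generalize G' (σ b * ν) = Q
  generalize Complex.exp (Complex.I * (2 * (π:ℂ) * ξ₀ * b)) = E at hEx0 ⊢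
  have hD1 : Complex.I * 2 * (π:ℂ) * (↑A * E * P) ≠ 0 := by
    simp [Complex.I_ne_zero, hπ0, hA0, hEx0, hP0]
  have hD2 : Complex.I * 2 * (π:ℂ) * ((σ b : ℝ) : ℂ) ≠ 0 := by
    simp [Complex.I_ne_zero, hπ0, hs0]
  rw [div_mul_div_comm, div_add_div _ _ hD1 hD2,
    div_add_div _ _ (mul_ne_zero hD1 hD2) (mul_ne_zero hs0 hD1),
    div_eq_iff (mul_ne_zero (mul_ne_zero hD1 hD2) (mul_ne_zero hs0 hD1))]
  ring
end
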